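/- Let m ≥ 4 be even, let n be divisible by m/2 with m ≤ n/4, set N = 2n/m (so N ≥ 8), and let k be an integer with 2 ≤ k ≤ n/(2m) + 1. Let x_1, …, x_μ be μ ≥ 1 independent uniformly random bit strings in {0,1}^n. Then the probability that no x_i satisfies k ≤ |x_i^j|_1 ≤ N − k for every block j ∈ {1, …, m/2} is at most (1 − (2/3)^{m/2})^μ, which is at most exp(−μ·(2/3)^{m/2}). -/

import Mathlib

/-- Number of one-bits of a block `b ∈ {0,1}^N`. -/
def ones {N : ℕ} (b : Fin N → Bool) : ℕ :=
  (Finset.univ.filter fun i => b i = true).card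

/-- A search point in `{0,1}^n` with `n = (m/2) * N`, presented as `m/2` blocks of
length `N` each. -/
abbrev Point (M N : ℕ) := Fin M → Fin N → Bool

namespace InitFail

open Finset

/-- Partial sum of binomial coefficients. -/
def A (M c : ℕ) : ℕ := ∑ i ∈ Finset.range c, M.choose i

lemma pascalA (M c : ℕ) : A (M+1) (c+1) = A M (c+1) + A M c := by
  simp only [A, Finset.sum_range_succ', Nat.choose_succ_succ, Nat.choose_zero_right,
    Finset.sum_add_distrib]
  ring

lemma monoA (M : ℕ) {c d : ℕ} (h : c ≤ d) : A M c ≤ A M d :=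
  Finset.sum_le_sum_of_subset (Finset.range_subset_range.2 h)

lemma succA (M c : ℕ) : A M (c+1) = A M c + M.choose c := Finset.sum_range_succ _ _

lemma chooseStep (M s : ℕ) (h : M ≤ 4*s+3) : M.choose (s+1) ≤ 3 * M.choose s := by
  have h1 := Nat.choose_succ_right_eq M s
  have h2 : M - s ≤ 3*(s+1) := by omega
  have h3 : M.choose (s+1) * (s+1) ≤ (3 * M.choose s) * (s+1) := by
    rw [h1]
    calc M.choose s * (M - s) ≤ M.choose s * (3*(s+1)) := Nat.mul_le_mul_left _ h2
      _ = (3 * M.choose s) * (s+1) := by ring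
  exact Nat.le_of_mul_le_mul_right h3 (Nat.succ_pos s)

lemma step16 (M : ℕ) (hM : 8 ≤ M) : A (M+4) (M/4+2) ≤ 16 * A M (M/4+1) := by
  obtain ⟨s, hs⟩ : ∃ s, M/4 = s + 2 := ⟨M/4 - 2, by omega⟩
  rw [hs]
  have L4 : A (M+4) (s+4) = A (M+3) (s+4) + A (M+3) (s+3) := pascalA (M+3) (s+3)
  have L3a : A (M+3) (s+4) = A (M+2) (s+4) + A (M+2) (s+3) := pascalA (M+2) (s+3)
  have L3b : A (M+3) (s+3) = A (M+2) (s+3) + A (M+2) (s+2) := pascalA (M+2) (s+2)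
  have L2a : A (M+2) (s+4) = A (M+1) (s+4) + A (M+1) (s+3) := pascalA (M+1) (s+3)
  have L2b : A (M+2) (s+3) = A (M+1) (s+3) + A (M+1) (s+2) := pascalA (M+1) (s+2)
  have L2c : A (M+2) (s+2) = A (M+1) (s+2) + A (M+1) (s+1) := pascalA (M+1) (s+1)
  have L1a : A (M+1) (s+4) = A M (s+4) + A M (s+3) := pascalA M (s+3)
  have L1b : A (M+1) (s+3) = A M (s+3) + A M (s+2) := pascalA M (s+2)
  have L1c : A (M+1) (s+2) = A M (s+2) + A M (s+1) := pascalA M (s+1)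
  have L1d : A (M+1) (s+1) = A M (s+1) + A M s := pascalA M s
  have E1 : A M (s+4) = A M (s+3) + M.choose (s+3) := succA M (s+3)
  have E2 : A M (s+3) = A M (s+2) + M.choose (s+2) := succA M (s+2)
  have E3 : A M (s+1) ≤ A M (s+2) := monoA M (by omega)
  have E3' : A M s ≤ A M (s+2) := monoA M (by omega)
  have E4 : M.choose (s+3) ≤ 3 * M.choose (s+2) := chooseStep M (s+2) (by omega)
  rw [show s+2+2 = s+4 by omega, show s+2+1 = s+3 by omega]
  omega

lemma keyA : ∀ N, 8 ≤ N → 6 * A N (N/4+1) ≤ 2^N := by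
  intro N
  induction N using Nat.strong_induction_on with
  | _ N ih =>
    intro hN
    by_cases h12 : N < 12
    · interval_cases N <;> decide
    · obtain ⟨M, rfl⟩ : ∃ M, N = M + 4 := ⟨N - 4, by omega⟩
      have hM : 8 ≤ M := by omega
      have h1 := step16 M hM
      have h2 := ih M (by omega) hM
      have ht : (M+4)/4 + 1 = M/4 + 2 := by omega
      rw [ht]
      calc 6 * A (M+4) (M/4+2) ≤ 6 * (16 * A M (M/4+1)) := Nat.mul_le_mul_left _ h1
        _ = 16 * (6 * A M (M/4+1)) := by ring
        _ ≤ 16 * 2^M := Nat.mul_le_mul_left _ h2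
        _ = 2^(M+4) := by rw [pow_add]; ring

lemma ones_le {N : ℕ} (b : Fin N → Bool) : ones b ≤ N := by
  simpa [ones] using (card_filter_le Finset.univ fun i => b i = true)

lemma ones_not {N : ℕ} (b : Fin N → Bool) : ones (fun j => !(b j)) = N - ones b := by
  have h : (Finset.univ.filter fun j => (!(b j)) = true)
      = Finset.univ \ (Finset.univ.filter fun j => b j = true) := by
    ext j; simp
  have := ones_le b
  simp only [ones, h, card_sdiff_of_subset (filter_subset _ _)]
  simp [ones]

lemma card_ones_eq (N i : ℕ) :
    (Finset.univ.filter fun b : Fin N → Bool => ones b = i).card = N.choose i := by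
  classical
  have h : (Finset.univ.powersetCard i (α := Fin N)).card = N.choose i := by
    simp [Finset.card_powersetCard]
  rw [← h]
  apply Finset.card_bij (fun b _ => Finset.univ.filter fun j => b j = true)
  · intro b hb
    simp only [mem_filter, mem_univ, true_and] at hb
    simp [Finset.mem_powersetCard, ← hb, ones]
  · intro b1 h1 b2 h2 he
    funext j
    have := Finset.ext_iff.1 he j
    simp only [mem_filter, mem_univ, true_and] at this
    cases hb1 : b1 j <;> cases hb2 : b2 j <;> simp_all
  · intro s hs
    refine ⟨fun j => decide (j ∈ s), ?_, ?_⟩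
    · simp only [Finset.mem_powersetCard] at hs
      rw [mem_filter]; simp only [mem_univ, true_and, ones]
      rw [show (Finset.univ.filter fun j => decide (j ∈ s) = true) = s by ext j; simp]
      exact hs.2
    · ext j; simp

lemma card_lower (N k : ℕ) :
    (Finset.univ.filter fun b : Fin N → Bool => ones b < k).card = A N k := by
  classical
  rw [Finset.card_eq_sum_card_fiberwise (f := fun b => ones b) (t := Finset.range k)
    (fun b hb => by simpa using (mem_filter.1 hb).2)]
  unfold A
  refine Finset.sum_congr rfl fun i hi => ?_
  rw [← card_ones_eq N i]
  congr 1
  ext b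
  simp only [mem_filter, mem_univ, true_and, mem_range] at *
  constructor
  · rintro ⟨_, h⟩; exact h
  · rintro h; exact ⟨by omega, h⟩

lemma card_upper (N k : ℕ) :
    (Finset.univ.filter fun b : Fin N → Bool => N - k < ones b).card
      ≤ (Finset.univ.filter fun b : Fin N → Bool => ones b < k).card := by
  classical
  apply Finset.card_le_card_of_injOn (fun b => fun j => !(b j))
  · intro b hb
    simp only [mem_coe, mem_filter, mem_univ, true_and] at *
    rw [ones_not]
    have := ones_le b
    omega
  · intro b1 _ b2 _ he
    funext j
    have := congrFun he j
    simpa using this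

lemma card_badblock (N k : ℕ) :
    (Finset.univ.filter fun b : Fin N → Bool => ¬(k ≤ ones b ∧ ones b ≤ N - k)).card
      ≤ 2 * A N k := by
  classical
  have hsub : (Finset.univ.filter fun b : Fin N → Bool => ¬(k ≤ ones b ∧ ones b ≤ N - k))
      ⊆ (Finset.univ.filter fun b : Fin N → Bool => ones b < k)
        ∪ (Finset.univ.filter fun b : Fin N → Bool => N - k < ones b) := by
    intro b hb
    simp only [mem_filter, mem_univ, true_and, mem_union] at *
    omega
  calc _ ≤ _ := Finset.card_le_card hsub
    _ ≤ (Finset.univ.filter fun b : Fin N → Bool => ones b < k).card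
        + (Finset.univ.filter fun b : Fin N → Bool => N - k < ones b).card :=
      Finset.card_union_le _ _
    _ ≤ 2 * A N k := by
      have h1 := card_upper N k
      have h2 := card_lower N k
      omega

lemma card_pi_filter {ι : Type*} [Fintype ι] [DecidableEq ι] {α : Type*} [Fintype α]
    [DecidableEq α] (p : α → Prop) [dp1 : DecidablePred p]
    {dp2 : DecidablePred fun f : ι → α => ∀ i, p (f i)} :
    (@Finset.filter _ _ dp2 Finset.univ).card
      = (Finset.univ.filter p).card ^ (Fintype.card ι) := by
  have h : (@Finset.filter _ _ dp2 Finset.univ)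
      = Fintype.piFinset (fun _ : ι => Finset.univ.filter p) := by
    ext f
    simp [Fintype.mem_piFinset]
  rw [h, Fintype.card_piFinset]
  simp

end InitFail

open InitFail Finset

/-- with `m ≥ 4` even, `m/2 ∣ n`, `m ≤ n/4`, `N = 2n/m` and
`2 ≤ k ≤ n/(2m) + 1`, the probability that none of `μ ≥ 1` independent uniformly random
search points `x ∈ {0,1}^n` satisfies `k ≤ |x^j|₁ ≤ N − k` in every block `j` is at most
`(1 − (2/3)^(m/2))^μ ≤ exp(−μ·(2/3)^(m/2))`. -/
theorem init_failure_prob (m n N k μ : ℕ) (hm : 4 ≤ m) (hme : m % 2 = 0)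
    (hn : 0 < n) (hdvd : m / 2 ∣ n) (hmn : m ≤ n / 4) (hN : N = 2 * n / m)
    (hk2 : 2 ≤ k) (hk : k ≤ n / (2 * m) + 1) (hμ : 1 ≤ μ) :
    ((Finset.univ.filter fun xs : Fin μ → Point (m / 2) N =>
        ∀ i, ¬ ∀ j, k ≤ ones (xs i j) ∧ ones (xs i j) ≤ N - k).card : ℝ) /
        (Fintype.card (Fin μ → Point (m / 2) N) : ℝ)
      ≤ (1 - (2 / 3 : ℝ) ^ (m / 2)) ^ μ ∧
    (1 - (2 / 3 : ℝ) ^ (m / 2)) ^ μ ≤ Real.exp (-(μ : ℝ) * (2 / 3 : ℝ) ^ (m / 2)) := by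
  obtain ⟨q, hq⟩ := hdvd
  have hNq : N = q := by
    have hm2 : m = 2*(m/2) := by omega
    have hmq : 2 * n = q * m := by
      rw [hq]; conv_rhs => rw [hm2]
      ring
    rw [hN, hmq, Nat.mul_div_cancel q (by omega : 0 < m)]
  have hn' : n = (m/2) * N := by rw [hNq]; exact hq
  have h4m : 4 * m ≤ n := by
    have := (Nat.le_div_iff_mul_le (by norm_num : 0 < 4)).1 hmn
    omega
  have hN8 : 8 ≤ N := by
    have h8 : (m/2) * 8 ≤ (m/2) * N := by
      calc (m/2) * 8 = 4 * m := by omega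
        _ ≤ n := h4m
        _ = (m/2) * N := hn'
    exact Nat.le_of_mul_le_mul_left h8 (by omega)
  have hkN : k ≤ N/4 + 1 := by
    have e : n / (2*m) = N / 4 := by
      rw [hn', show 2*m = (m/2)*4 by omega]
      exact Nat.mul_div_mul_left N 4 (by omega)
    omega
  -- block counts
  set g := (Finset.univ.filter fun b : Fin N → Bool => k ≤ ones b ∧ ones b ≤ N - k).card with hgdef
  have hbbg : (Finset.univ.filter fun b : Fin N → Bool => ¬(k ≤ ones b ∧ ones b ≤ N - k)).card + g
      = 2^N := by
    rw [add_comm, Finset.card_filter_add_card_filter_not]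
    simp [card_univ]
  have hbb := card_badblock N k
  have hA1 : A N k ≤ A N (N/4+1) := monoA N hkN
  have hkey := keyA N hN8
  have hg3 : 2 * 2^N ≤ 3 * g := by omega
  have hgle1 : g ≤ 2^N := by omega
  -- point counts
  have hGp : (Finset.univ.filter fun x : Point (m/2) N =>
      ∀ j, k ≤ ones (x j) ∧ ones (x j) ≤ N - k).card = g ^ (m/2) := by
    rw [card_pi_filter (p := fun b : Fin N → Bool => k ≤ ones b ∧ ones b ≤ N - k),
      Fintype.card_fin]
  have hBp : (Finset.univ.filter fun x : Point (m/2) N =>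
      ¬ ∀ j, k ≤ ones (x j) ∧ ones (x j) ≤ N - k).card = (2^N)^(m/2) - g^(m/2) := by
    rw [Finset.filter_not, Finset.card_sdiff_of_subset (Finset.filter_subset _ _), hGp]
    congr 1
    simp [card_univ]
  have hcount : (Finset.univ.filter fun xs : Fin μ → Point (m/2) N =>
        ∀ i, ¬ ∀ j, k ≤ ones (xs i j) ∧ ones (xs i j) ≤ N - k).card
      = ((2^N)^(m/2) - g^(m/2)) ^ μ := by
    rw [card_pi_filter (p := fun x : Point (m/2) N =>
        ¬ ∀ j, k ≤ ones (x j) ∧ ones (x j) ≤ N - k),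
      Fintype.card_fin, hBp]
  have hcardT : (Fintype.card (Fin μ → Point (m/2) N)) = (((2:ℕ)^N)^(m/2))^μ := by
    simp [pow_mul]
  have hgle : g ^ (m/2) ≤ (2^N)^(m/2) := Nat.pow_le_pow_left hgle1 _
  -- real part
  have hD : (0:ℝ) < (2:ℝ)^N := by positivity
  have hDM : (0:ℝ) < ((2:ℝ)^N)^(m/2) := by positivity
  have h23 : (2/3 : ℝ) ≤ (g:ℝ) / (2:ℝ)^N := by
    rw [le_div_iff₀ hD]
    have : (2:ℝ) * 2^N ≤ 3 * g := by exact_mod_cast hg3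
    linarith
  have hgR : ((2:ℝ)/3)^(m/2) ≤ (g:ℝ)^(m/2) / ((2:ℝ)^N)^(m/2) := by
    rw [← div_pow]
    exact pow_le_pow_left₀ (by norm_num) h23 _
  have ha1 : ((2:ℝ)/3)^(m/2) ≤ 1 := pow_le_one₀ (by norm_num) (by norm_num)
  constructor
  · rw [hcount, hcardT]
    push_cast [Nat.cast_sub hgle]
    rw [← div_pow]
    apply pow_le_pow_left₀
    · apply div_nonneg _ (le_of_lt hDM)
      have : (g:ℝ)^(m/2) ≤ ((2:ℝ)^N)^(m/2) := by
        apply pow_le_pow_left₀ (Nat.cast_nonneg _)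
        exact_mod_cast hgle1
      linarith
    · rw [sub_div, div_self hDM.ne']
      have : ((2:ℝ)/3)^(m/2) ≤ (g:ℝ)^(m/2) / ((2:ℝ)^N)^(m/2) := hgR
      have h23' : (2/3 : ℝ) = 2/3 := rfl
      linarith
  · have ha0 : (0:ℝ) ≤ 1 - (2/3:ℝ)^(m/2) := by
      have : ((2:ℝ)/3)^(m/2) ≤ 1 := ha1
      linarith
    calc (1 - (2/3:ℝ)^(m/2))^μ ≤ (Real.exp (-(2/3:ℝ)^(m/2)))^μ := by
          apply pow_le_pow_left₀ ha0
          have := Real.add_one_le_exp (-(2/3:ℝ)^(m/2))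
          linarith
      _ = Real.exp (-(μ:ℝ) * (2/3:ℝ)^(m/2)) := by
          rw [← Real.exp_nat_mul]
          ring_nf
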